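/- Suppose q_v > 0 for all v. Let m = min_{v∈V} (1+λ_v)/q_v, M = max_{v∈V} (1+λ_v)/q_v, and ξ = M/m. If θ := min_{v∈V} { 1 + λ_v − Σ_{w∈N_v} λ_w } > 0, then the mixing time of the parallel Glauber dynamics satisfies T_mix ≤ ⌈(M/θ) log(nξe)⌉. -/

import Mathlib

open Finset

variable {V : Type*} [Fintype V] [DecidableEq V]

/-- A finite set of vertices is independent in `G`. -/
def IsInd (G : SimpleGraph V) [DecidableRel G.Adj] (s : Finset V) : Prop :=
  ∀ v ∈ s, ∀ w ∈ s, ¬ G.Adj v w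

instance (G : SimpleGraph V) [DecidableRel G.Adj] (s : Finset V) :
    Decidable (IsInd G s) := by
  unfold IsInd; infer_instance

/-- `q_v`: probability that vertex `v` belongs to the decision schedule. -/
noncomputable def qVert (q : Finset V → ℝ) (v : V) : ℝ :=
  ∑ m ∈ univ.filter (fun m => v ∈ m), q m

/-- Per-vertex factor of the transition probability of the parallel Glauber
dynamics, given current schedule `σ`, decision schedule `m`, next schedule `σ'`. -/
noncomputable def stepFactor (G : SimpleGraph V) [DecidableRel G.Adj] (lam : V → ℝ)
    (σ m σ' : Finset V) (v : V) : ℝ :=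
  if v ∈ m then
    (if ∃ w ∈ σ, G.Adj v w then (if v ∈ σ' then 0 else 1)
     else (if v ∈ σ' then lam v / (1 + lam v) else 1 / (1 + lam v)))
  else (if (v ∈ σ' ↔ v ∈ σ) then 1 else 0)

/-- Transition matrix of the parallel Glauber dynamics. -/
noncomputable def pgdP (G : SimpleGraph V) [DecidableRel G.Adj] (lam : V → ℝ)
    (q : Finset V → ℝ) (σ σ' : Finset V) : ℝ :=
  ∑ m : Finset V, q m * ∏ v : V, stepFactor G lam σ m σ' v

/-- Distribution at time `t` of a Markov chain with transition matrix `P`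
started at state `x`. -/
noncomputable def chainDist {S : Type*} [Fintype S] [DecidableEq S]
    (P : S → S → ℝ) (x : S) : ℕ → S → ℝ
  | 0 => fun s => if s = x then 1 else 0
  | t + 1 => fun s => ∑ s' : S, chainDist P x t s' * P s' s

/-- `t`-step transition probabilities. -/
noncomputable def chainPow {S : Type*} [Fintype S] [DecidableEq S]
    (P : S → S → ℝ) : ℕ → S → S → ℝ
  | 0 => fun x y => if x = y then 1 else 0
  | t + 1 => fun x y => ∑ z : S, chainPow P t x z * P z y

/-- Total variation distance between two distributions on a finite set. -/
noncomputable def tvDist {S : Type*} [Fintype S] (μ ν : S → ℝ) : ℝ :=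
  (1 / 2) * ∑ s : S, |μ s - ν s|

/-- The product-form distribution on independent sets with fugacities `lam`. -/
noncomputable def prodForm (G : SimpleGraph V) [DecidableRel G.Adj]
    (lam : V → ℝ) (σ : Finset V) : ℝ :=
  if IsInd G σ then
    (∏ v ∈ σ, lam v) / (∑ σ' ∈ univ.filter (fun s => IsInd G s), ∏ v ∈ σ', lam v)
  else 0

/-- Mixing time: the maximum over starting states in `states` of the first time
the distribution is within `1/e` of `π` in total variation. -/
noncomputable def mixTime {S : Type*} [Fintype S] [DecidableEq S]
    (P : S → S → ℝ) (π : S → ℝ) (states : Finset S) : ℕ :=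
  states.sup fun x => sInf {t : ℕ | tvDist (chainDist P x t) π ≤ 1 / Real.exp 1}

set_option linter.unusedSectionVars false

lemma sumA (F : V → Bool → ℝ) :
    ∑ s : Finset V, ∏ v : V, F v (decide (v ∈ s)) = ∏ v : V, (F v true + F v false) := by
  rw [Finset.prod_add, Finset.powerset_univ]
  apply Finset.sum_congr rfl
  intro s _
  rw [← Finset.prod_filter_mul_prod_filter_not univ (· ∈ s)]
  congr 1
  · rw [Finset.filter_mem_eq_inter, Finset.univ_inter]
    exact Finset.prod_congr rfl (fun v hv => by simp [hv])
  · have : Finset.filter (fun x => x ∉ s) univ = univ \ s := by ext v; simp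
    rw [this]
    refine Finset.prod_congr rfl (fun v hv => by simp at hv; simp [hv])

/-- Bool-indexed per-vertex step factor. -/
noncomputable def sfB (G : SimpleGraph V) [DecidableRel G.Adj] (lam : V → ℝ)
    (σ m : Finset V) (v : V) (b : Bool) : ℝ :=
  if v ∈ m then
    (if ∃ w ∈ σ, G.Adj v w then (if b then 0 else 1)
     else (if b then lam v / (1 + lam v) else 1 / (1 + lam v)))
  else (if b = decide (v ∈ σ) then 1 else 0)

lemma stepFactor_eq_sfB (G : SimpleGraph V) [DecidableRel G.Adj] (lam : V → ℝ)
    (σ m σ' : Finset V) (v : V) :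
    stepFactor G lam σ m σ' v = sfB G lam σ m v (decide (v ∈ σ')) := by
  unfold stepFactor sfB
  by_cases h1 : v ∈ σ' <;> by_cases h2 : v ∈ σ <;> simp [h1, h2]

/-- Per-vertex factor of the coupled transition. -/
noncomputable def pf (G : SimpleGraph V) [DecidableRel G.Adj] (lam : V → ℝ)
    (σ τ m : Finset V) (v : V) (b1 b2 : Bool) : ℝ :=
  if v ∈ m then
    (if ∃ w ∈ σ, G.Adj v w then
       (if ∃ w ∈ τ, G.Adj v w then (if b1 || b2 then 0 else 1)
        else (if b1 then 0 else (if b2 then lam v / (1 + lam v) else 1 / (1 + lam v))))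
     else
       (if ∃ w ∈ τ, G.Adj v w then
          (if b2 then 0 else (if b1 then lam v / (1 + lam v) else 1 / (1 + lam v)))
        else (if b1 = b2 then (if b1 then lam v / (1 + lam v) else 1 / (1 + lam v)) else 0)))
  else (if b1 = decide (v ∈ σ) ∧ b2 = decide (v ∈ τ) then 1 else 0)

section pfLemmas
variable (G : SimpleGraph V) [DecidableRel G.Adj] (lam : V → ℝ)
  (σ τ m : Finset V) (v : V)

lemma lam_div_add (hl : 0 < lam v) : lam v / (1 + lam v) + 1 / (1 + lam v) = 1 := by
  field_simp
  ring

lemma pf_nonneg (hlam : ∀ v, 0 < lam v) (b1 b2 : Bool) : 0 ≤ pf G lam σ τ m v b1 b2 := by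
  have h := (hlam v)
  have h1 : (0:ℝ) < 1 + lam v := by linarith
  unfold pf
  split_ifs <;> positivity

lemma pf_sum_b2 (hlam : ∀ v, 0 < lam v) (b1 : Bool) :
    pf G lam σ τ m v b1 true + pf G lam σ τ m v b1 false = sfB G lam σ m v b1 := by
  have h := hlam v
  have h1 : lam v / (1 + lam v) + 1 / (1 + lam v) = 1 := lam_div_add lam v h
  have h1' : lam v / (1 + lam v) + (1 + lam v)⁻¹ = 1 := by rw [← one_div]; exact h1
  unfold pf sfB
  by_cases hm : v ∈ m <;> by_cases hf1 : ∃ w ∈ σ, G.Adj v w <;>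
    by_cases hf2 : ∃ w ∈ τ, G.Adj v w <;> cases b1 <;>
    by_cases hs : v ∈ σ <;> by_cases ht : v ∈ τ <;>
    simp [hm, hf1, hf2, h1, h1', hs, ht]

lemma pf_sum_b1 (hlam : ∀ v, 0 < lam v) (b2 : Bool) :
    pf G lam σ τ m v true b2 + pf G lam σ τ m v false b2 = sfB G lam τ m v b2 := by
  have h := hlam v
  have h1 : lam v / (1 + lam v) + 1 / (1 + lam v) = 1 := lam_div_add lam v h
  have h1' : lam v / (1 + lam v) + (1 + lam v)⁻¹ = 1 := by rw [← one_div]; exact h1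
  unfold pf sfB
  by_cases hm : v ∈ m <;> by_cases hf1 : ∃ w ∈ σ, G.Adj v w <;>
    by_cases hf2 : ∃ w ∈ τ, G.Adj v w <;> cases b2 <;>
    by_cases hs : v ∈ σ <;> by_cases ht : v ∈ τ <;>
    simp [hm, hf1, hf2, h1, h1', hs, ht]

lemma sfB_sum (hlam : ∀ v, 0 < lam v) :
    sfB G lam σ m v true + sfB G lam σ m v false = 1 := by
  have h := hlam v
  have h1 : lam v / (1 + lam v) + 1 / (1 + lam v) = 1 := lam_div_add lam v h
  have h1' : lam v / (1 + lam v) + (1 + lam v)⁻¹ = 1 := by rw [← one_div]; exact h1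
  unfold sfB
  by_cases hm : v ∈ m <;> by_cases hf1 : ∃ w ∈ σ, G.Adj v w <;>
    by_cases hs : v ∈ σ <;> simp [hm, hf1, hs, h1, h1']

lemma pf_discSum :
    pf G lam σ τ m v true false + pf G lam σ τ m v false true =
      if v ∈ m then
        (if (∃ w ∈ σ, G.Adj v w) ↔ (∃ w ∈ τ, G.Adj v w) then 0 else lam v / (1 + lam v))
      else (if (v ∈ σ ↔ v ∈ τ) then 0 else 1) := by
  unfold pf
  by_cases hm : v ∈ m <;> by_cases hf1 : ∃ w ∈ σ, G.Adj v w <;>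
    by_cases hf2 : ∃ w ∈ τ, G.Adj v w <;>
    by_cases hs : v ∈ σ <;> by_cases ht : v ∈ τ <;>
    simp [hm, hf1, hf2, hs, ht]

end pfLemmas


section coupling
variable (G : SimpleGraph V) [DecidableRel G.Adj] (lam : V → ℝ) (q : Finset V → ℝ)

/-- The coupled transition kernel. -/
noncomputable def cK (σ τ σ' τ' : Finset V) : ℝ :=
  ∑ m : Finset V, q m * ∏ v : V, pf G lam σ τ m v (decide (v ∈ σ')) (decide (v ∈ τ'))

lemma prod_stepFactor (σ m σ' : Finset V) :
    ∏ v : V, stepFactor G lam σ m σ' v = ∏ v : V, sfB G lam σ m v (decide (v ∈ σ')) :=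
  Finset.prod_congr rfl (fun v _ => stepFactor_eq_sfB G lam σ m σ' v)

lemma cK_nonneg (hlam : ∀ v, 0 < lam v) (hq0 : ∀ m, 0 ≤ q m) (σ τ σ' τ' : Finset V) :
    0 ≤ cK G lam q σ τ σ' τ' := by
  refine Finset.sum_nonneg (fun m _ => mul_nonneg (hq0 m) (Finset.prod_nonneg ?_))
  exact fun v _ => pf_nonneg G lam σ τ m v hlam _ _

lemma cK_marg_snd (hlam : ∀ v, 0 < lam v) (σ τ σ' : Finset V) :
    ∑ τ' : Finset V, cK G lam q σ τ σ' τ' = pgdP G lam q σ σ' := by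
  unfold cK pgdP
  rw [Finset.sum_comm]
  refine Finset.sum_congr rfl (fun mm _ => ?_)
  rw [← Finset.mul_sum]
  congr 1
  rw [sumA (fun v b => pf G lam σ τ mm v (decide (v ∈ σ')) b), prod_stepFactor]
  exact Finset.prod_congr rfl (fun v _ => pf_sum_b2 G lam σ τ mm v hlam _)

lemma cK_marg_fst (hlam : ∀ v, 0 < lam v) (σ τ τ' : Finset V) :
    ∑ σ' : Finset V, cK G lam q σ τ σ' τ' = pgdP G lam q τ τ' := by
  unfold cK pgdP
  rw [Finset.sum_comm]
  refine Finset.sum_congr rfl (fun mm _ => ?_)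
  rw [← Finset.mul_sum]
  congr 1
  rw [sumA (fun v b => pf G lam σ τ mm v b (decide (v ∈ τ'))), prod_stepFactor]
  exact Finset.prod_congr rfl (fun v _ => pf_sum_b1 G lam σ τ mm v hlam _)

lemma pgdP_rowsum (hlam : ∀ v, 0 < lam v) (hqsum : ∑ m : Finset V, q m = 1)
    (σ : Finset V) : ∑ σ' : Finset V, pgdP G lam q σ σ' = 1 := by
  unfold pgdP
  rw [Finset.sum_comm, ← hqsum]
  refine Finset.sum_congr rfl (fun mm _ => ?_)
  have : ∀ σ' : Finset V, ∏ v : V, stepFactor G lam σ mm σ' v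
      = ∏ v : V, sfB G lam σ mm v (decide (v ∈ σ')) := fun σ' => prod_stepFactor G lam σ mm σ'
  simp_rw [this, ← Finset.mul_sum, sumA (fun v b => sfB G lam σ mm v b)]
  rw [Finset.prod_congr rfl (fun v _ => sfB_sum G lam σ mm v hlam), Finset.prod_const_one,
    mul_one]

lemma pgdP_nonneg (hlam : ∀ v, 0 < lam v) (hq0 : ∀ m, 0 ≤ q m) (σ σ' : Finset V) :
    0 ≤ pgdP G lam q σ σ' := by
  rw [← cK_marg_snd G lam q hlam σ σ σ']
  exact Finset.sum_nonneg fun τ' _ => cK_nonneg G lam q hlam hq0 σ σ σ' τ'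

end coupling


lemma sum_rot {A B C : Type*} [Fintype A] [Fintype B] [Fintype C] (f : A → B → C → ℝ) :
    ∑ a : A, ∑ b : B, ∑ c : C, f a b c = ∑ c : C, ∑ a : A, ∑ b : B, f a b c := by
  calc ∑ a : A, ∑ b : B, ∑ c : C, f a b c
      = ∑ a : A, ∑ c : C, ∑ b : B, f a b c :=
        Finset.sum_congr rfl fun a _ => Finset.sum_comm
    _ = ∑ c : C, ∑ a : A, ∑ b : B, f a b c := Finset.sum_comm

lemma sum_biUnion_le' {α β : Type*} [DecidableEq β] (s : Finset α) (t : α → Finset β)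
    (f : β → ℝ) (hf : ∀ b, 0 ≤ f b) :
    ∑ b ∈ s.biUnion t, f b ≤ ∑ a ∈ s, ∑ b ∈ t a, f b := by
  classical
  induction s using Finset.induction with
  | empty => simp
  | @insert a s ha ih =>
    rw [Finset.biUnion_insert, Finset.sum_insert ha]
    have h1 : ∑ b ∈ (t a ∪ s.biUnion t), f b + ∑ b ∈ (t a ∩ s.biUnion t), f b
        = ∑ b ∈ t a, f b + ∑ b ∈ s.biUnion t, f b := Finset.sum_union_inter
    have h2 : 0 ≤ ∑ b ∈ (t a ∩ s.biUnion t), f b := Finset.sum_nonneg fun b _ => hf b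
    linarith

section contraction
variable (G : SimpleGraph V) [DecidableRel G.Adj] (lam : V → ℝ) (q : Finset V → ℝ)

/-- Weight of a vertex. -/
noncomputable def wt (v : V) : ℝ := (1 + lam v) / qVert q v

/-- Weighted Hamming distance. -/
noncomputable def dW (σ τ : Finset V) : ℝ :=
  ∑ v : V, wt lam q v * (if (v ∈ σ ↔ v ∈ τ) then 0 else 1)

lemma dW_nonneg (hlam : ∀ v, 0 < lam v) (hqv : ∀ v, 0 < qVert q v) (σ τ : Finset V) :
    0 ≤ dW lam q σ τ := by
  refine Finset.sum_nonneg fun v _ => mul_nonneg ?_ (by positivity)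
  have := hlam v; have := hqv v
  unfold wt; positivity

lemma inner_disc (hlam : ∀ v, 0 < lam v) (σ τ m : Finset V) (v : V) :
    ∑ σ' : Finset V, ∑ τ' : Finset V,
      (∏ u : V, pf G lam σ τ m u (decide (u ∈ σ')) (decide (u ∈ τ'))) *
        (if (v ∈ σ' ↔ v ∈ τ') then 0 else 1)
    = if v ∈ m then
        (if (∃ w ∈ σ, G.Adj v w) ↔ (∃ w ∈ τ, G.Adj v w) then 0 else lam v / (1 + lam v))
      else (if (v ∈ σ ↔ v ∈ τ) then 0 else 1) := by
  set F : V → Bool → Bool → ℝ := fun u b1 b2 =>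
    pf G lam σ τ m u b1 b2 * (if u = v then (if b1 = b2 then 0 else 1) else 1) with hF
  have hrw : ∀ σ' τ' : Finset V,
      (∏ u : V, pf G lam σ τ m u (decide (u ∈ σ')) (decide (u ∈ τ'))) *
        (if (v ∈ σ' ↔ v ∈ τ') then 0 else 1)
      = ∏ u : V, F u (decide (u ∈ σ')) (decide (u ∈ τ')) := by
    intro σ' τ'
    rw [hF]
    rw [Finset.prod_mul_distrib]
    congr 1
    rw [Finset.prod_eq_single v (fun u _ hu => by simp [hu]) (by simp)]
    by_cases h1 : v ∈ σ' <;> by_cases h2 : v ∈ τ' <;> simp [h1, h2]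
  simp_rw [hrw]
  have step1 : ∀ σ' : Finset V,
      ∑ τ' : Finset V, ∏ u : V, F u (decide (u ∈ σ')) (decide (u ∈ τ'))
      = ∏ u : V, (F u (decide (u ∈ σ')) true + F u (decide (u ∈ σ')) false) :=
    fun σ' => sumA (fun u b => F u (decide (u ∈ σ')) b)
  simp_rw [step1]
  rw [sumA (fun u b => F u b true + F u b false)]
  rw [Finset.prod_eq_single v (fun u _ hu => ?_) (by simp)]
  · have := pf_discSum G lam σ τ m v
    simp only [hF, if_pos rfl]
    simp only [show (true = true) = True by simp, show (true = false) = False by simp,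
      show (false = true) = False by simp, show (false = false) = True by simp,
      if_true, if_false, mul_zero, mul_one]
    linarith [this]
  · have e1 : F u true true + F u true false = sfB G lam σ m u true := by
      simp only [hF, if_neg hu]; simp [pf_sum_b2 G lam σ τ m u hlam true]
    have e2 : F u false true + F u false false = sfB G lam σ m u false := by
      simp only [hF, if_neg hu]; simp [pf_sum_b2 G lam σ τ m u hlam false]
    rw [e1, e2, sfB_sum G lam σ m u hlam]

lemma cK_exp_dist_le (hlam : ∀ v, 0 < lam v) (hq0 : ∀ m, 0 ≤ q m)
    (hqsum : ∑ m : Finset V, q m = 1) (hqv : ∀ v, 0 < qVert q v)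
    (M θ : ℝ) (hMw : ∀ v, wt lam q v ≤ M) (hMpos : 0 < M)
    (hθle : ∀ v, θ ≤ 1 + lam v - ∑ w ∈ G.neighborFinset v, lam w) (hθpos : 0 < θ)
    (σ τ : Finset V) :
    ∑ σ' : Finset V, ∑ τ' : Finset V, cK G lam q σ τ σ' τ' * dW lam q σ' τ'
      ≤ (1 - θ / M) * dW lam q σ τ := by
  classical
  set mixc : V → ℝ := fun v =>
    if (∃ w ∈ σ, G.Adj v w) ↔ (∃ w ∈ τ, G.Adj v w) then 0 else lam v / (1 + lam v) with hmixc
  set chi : V → ℝ := fun v => if (v ∈ σ ↔ v ∈ τ) then 0 else 1 with hchi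
  have key : ∑ σ' : Finset V, ∑ τ' : Finset V, cK G lam q σ τ σ' τ' * dW lam q σ' τ'
      = ∑ v : V, wt lam q v * (qVert q v * mixc v + (1 - qVert q v) * chi v) := by
    unfold cK dW
    simp_rw [Finset.sum_mul, Finset.mul_sum]
    rw [sum_rot]
    have inner : ∀ mm : Finset V,
        ∑ σ' : Finset V, ∑ τ' : Finset V, ∑ v : V,
          q mm * (∏ u : V, pf G lam σ τ mm u (decide (u ∈ σ')) (decide (u ∈ τ'))) *
            (wt lam q v * (if (v ∈ σ' ↔ v ∈ τ') then 0 else 1))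
        = ∑ v : V, (q mm * wt lam q v) *
            (if v ∈ mm then mixc v else chi v) := by
      intro mm
      rw [sum_rot]
      refine Finset.sum_congr rfl fun v _ => ?_
      have : ∀ σ' τ' : Finset V,
          q mm * (∏ u : V, pf G lam σ τ mm u (decide (u ∈ σ')) (decide (u ∈ τ'))) *
            (wt lam q v * (if (v ∈ σ' ↔ v ∈ τ') then 0 else 1))
          = (q mm * wt lam q v) *
            ((∏ u : V, pf G lam σ τ mm u (decide (u ∈ σ')) (decide (u ∈ τ'))) *
              (if (v ∈ σ' ↔ v ∈ τ') then 0 else 1)) := by intro σ' τ'; ring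
      simp_rw [this, ← Finset.mul_sum]
      rw [inner_disc G lam hlam σ τ mm v]
      all_goals (by_cases h : v ∈ mm <;> simp [h, hmixc, hchi])
    simp_rw [inner]
    rw [Finset.sum_comm]
    refine Finset.sum_congr rfl fun v _ => ?_
    rw [← Finset.sum_filter_add_sum_filter_not univ (fun mm => v ∈ mm)]
    have e1 : ∑ mm ∈ univ.filter (fun mm => v ∈ mm),
        (q mm * wt lam q v) * (if v ∈ mm then mixc v else chi v)
        = qVert q v * (wt lam q v * mixc v) := by
      rw [qVert, Finset.sum_mul]
      refine Finset.sum_congr rfl fun mm hmm => ?_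
      rw [Finset.mem_filter] at hmm
      rw [if_pos hmm.2]; ring
    have e2 : ∑ mm ∈ univ.filter (fun mm => ¬ v ∈ mm),
        (q mm * wt lam q v) * (if v ∈ mm then mixc v else chi v)
        = (1 - qVert q v) * (wt lam q v * chi v) := by
      have hsplit : qVert q v + ∑ mm ∈ univ.filter (fun mm => ¬ v ∈ mm), q mm = 1 := by
        rw [qVert, Finset.sum_filter_add_sum_filter_not univ (fun mm => v ∈ mm), hqsum]
      have : ∑ mm ∈ univ.filter (fun mm => ¬ v ∈ mm), q mm = 1 - qVert q v := by linarith
      rw [← this, Finset.sum_mul]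
      refine Finset.sum_congr rfl fun mm hmm => ?_
      rw [Finset.mem_filter] at hmm
      rw [if_neg hmm.2]; ring
    rw [e1, e2]; ring
  rw [key]
  -- now the combinatorial bound
  set A : Finset V := univ.filter (fun v => ¬ (v ∈ σ ↔ v ∈ τ)) with hA
  set B : Finset V := univ.filter
    (fun v => ¬ ((∃ w ∈ σ, G.Adj v w) ↔ (∃ w ∈ τ, G.Adj v w))) with hB
  have hdW : dW lam q σ τ = ∑ v ∈ A, wt lam q v := by
    unfold dW
    rw [hA, Finset.sum_filter]
    refine Finset.sum_congr rfl fun v _ => ?_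
    by_cases h : v ∈ σ ↔ v ∈ τ <;> simp [h]
  have hsum1 : ∑ v : V, wt lam q v * (qVert q v * mixc v + (1 - qVert q v) * chi v)
      = (∑ v ∈ B, lam v) + ∑ v ∈ A, (wt lam q v - (1 + lam v)) := by
    have hterm : ∀ v : V, wt lam q v * (qVert q v * mixc v + (1 - qVert q v) * chi v)
        = (if v ∈ B then lam v else 0) + (if v ∈ A then wt lam q v - (1 + lam v) else 0) := by
      intro v
      have hq := hqv v
      have hw : wt lam q v * qVert q v = 1 + lam v := by
        unfold wt; field_simp
      have hwmix : wt lam q v * (qVert q v * mixc v) = (if v ∈ B then lam v else 0) := by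
        rw [hmixc, hB]
        by_cases h : (∃ w ∈ σ, G.Adj v w) ↔ (∃ w ∈ τ, G.Adj v w)
        · simp [h]
        · have h1 : (0:ℝ) < 1 + lam v := by have := hlam v; linarith
          simp only [h, if_neg, Finset.mem_filter, Finset.mem_univ, true_and, not_false_iff,
            if_true]
          rw [show wt lam q v * (qVert q v * (lam v / (1 + lam v)))
              = (wt lam q v * qVert q v) * (lam v / (1 + lam v)) by ring, hw]
          field_simp
      have hwchi : wt lam q v * ((1 - qVert q v) * chi v)
          = (if v ∈ A then wt lam q v - (1 + lam v) else 0) := by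
        rw [hchi, hA]
        by_cases h : v ∈ σ ↔ v ∈ τ
        · simp [h]
        · simp only [h, Finset.mem_filter, Finset.mem_univ, true_and, not_false_iff, if_true,
            if_false]
          rw [show wt lam q v * ((1 - qVert q v) * 1)
              = wt lam q v - wt lam q v * qVert q v by ring, hw]
      rw [mul_add, hwmix, hwchi]
    simp_rw [hterm]
    rw [Finset.sum_add_distrib, Finset.sum_ite_mem, Finset.sum_ite_mem,
      Finset.univ_inter, Finset.univ_inter]
  rw [hsum1, hdW]
  have hBsub : B ⊆ A.biUnion (fun u => G.neighborFinset u) := by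
    intro v hv
    rw [hB, Finset.mem_filter] at hv
    rcases hv with ⟨-, hv⟩
    rw [Finset.mem_biUnion]
    by_cases h1 : ∃ w ∈ σ, G.Adj v w
    · have h2 : ¬ ∃ w ∈ τ, G.Adj v w := fun h2 => hv ⟨fun _ => h2, fun _ => h1⟩
      obtain ⟨w, hwσ, hadj⟩ := h1
      refine ⟨w, ?_, ?_⟩
      · rw [hA, Finset.mem_filter]
        refine ⟨Finset.mem_univ _, fun hiff => h2 ⟨w, hiff.mp hwσ, hadj⟩⟩
      · rw [SimpleGraph.mem_neighborFinset]; exact hadj.symm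
    · have h2 : ∃ w ∈ τ, G.Adj v w := by
        by_contra h2
        exact hv ⟨fun h => absurd h h1, fun h => absurd h h2⟩
      obtain ⟨w, hwτ, hadj⟩ := h2
      refine ⟨w, ?_, ?_⟩
      · rw [hA, Finset.mem_filter]
        refine ⟨Finset.mem_univ _, fun hiff => h1 ⟨w, hiff.mpr hwτ, hadj⟩⟩
      · rw [SimpleGraph.mem_neighborFinset]; exact hadj.symm
  have hBle : ∑ v ∈ B, lam v ≤ ∑ u ∈ A, ∑ w ∈ G.neighborFinset u, lam w := by
    calc ∑ v ∈ B, lam v ≤ ∑ v ∈ A.biUnion (fun u => G.neighborFinset u), lam v :=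
          Finset.sum_le_sum_of_subset_of_nonneg hBsub (fun v _ _ => (hlam v).le)
      _ ≤ ∑ u ∈ A, ∑ w ∈ G.neighborFinset u, lam w :=
          sum_biUnion_le' A _ lam (fun v => (hlam v).le)
  have final : (∑ v ∈ B, lam v) + ∑ v ∈ A, (wt lam q v - (1 + lam v))
      ≤ (1 - θ / M) * ∑ v ∈ A, wt lam q v := by
    rw [Finset.mul_sum]
    calc (∑ v ∈ B, lam v) + ∑ v ∈ A, (wt lam q v - (1 + lam v))
        ≤ (∑ u ∈ A, ∑ w ∈ G.neighborFinset u, lam w)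
            + ∑ v ∈ A, (wt lam q v - (1 + lam v)) := by linarith
      _ = ∑ v ∈ A, (wt lam q v - (1 + lam v - ∑ w ∈ G.neighborFinset v, lam w)) := by
          rw [← Finset.sum_add_distrib]; exact Finset.sum_congr rfl fun v _ => by ring
      _ ≤ ∑ v ∈ A, (1 - θ / M) * wt lam q v := by
          refine Finset.sum_le_sum fun v _ => ?_
          have h1 : θ ≤ 1 + lam v - ∑ w ∈ G.neighborFinset v, lam w := hθle v
          have h2 : wt lam q v ≤ M := hMw v
          have h3 : 0 < θ / M := div_pos hθpos hMpos
          have h4 : wt lam q v * (θ / M) ≤ M * (θ / M) :=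
            mul_le_mul_of_nonneg_right h2 h3.le
          have h5 : M * (θ / M) = θ := by field_simp
          nlinarith
  exact final

end contraction


section stationary
variable (G : SimpleGraph V) [DecidableRel G.Adj] (lam : V → ℝ) (q : Finset V → ℝ)

lemma Z_pos (hlam : ∀ v, 0 < lam v) :
    0 < ∑ σ' ∈ univ.filter (fun s => IsInd G s), ∏ v ∈ σ', lam v := by
  refine Finset.sum_pos (fun s _ => Finset.prod_pos fun v _ => hlam v) ⟨∅, ?_⟩
  exact Finset.mem_filter.mpr ⟨Finset.mem_univ _, fun v hv => by simp at hv⟩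

lemma prodForm_nonneg (hlam : ∀ v, 0 < lam v) (σ : Finset V) : 0 ≤ prodForm G lam σ := by
  unfold prodForm
  split_ifs
  · exact div_nonneg (Finset.prod_nonneg fun v _ => (hlam v).le) (Z_pos G lam hlam).le
  · exact le_refl 0

lemma prodForm_sum (hlam : ∀ v, 0 < lam v) : ∑ σ : Finset V, prodForm G lam σ = 1 := by
  unfold prodForm
  rw [Finset.sum_ite, Finset.sum_const_zero, add_zero, ← Finset.sum_div]
  · rw [div_self (Z_pos G lam hlam).ne']

lemma rev_core (hlam : ∀ v, 0 < lam v) (σ σ' m : Finset V)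
    (hσ : IsInd G σ) (hσ' : IsInd G σ') (hm : IsInd G m) :
    (∏ v ∈ σ, lam v) * ∏ v : V, stepFactor G lam σ m σ' v
      = (∏ v ∈ σ', lam v) * ∏ v : V, stepFactor G lam σ' m σ v := by
  by_cases hout : ∀ v, v ∉ m → (v ∈ σ ↔ v ∈ σ')
  · have l1 : (∏ v ∈ σ, lam v) = ∏ v : V, (if v ∈ σ then lam v else 1) := by
      rw [Finset.prod_ite_mem univ σ lam, Finset.univ_inter]
    have l2 : (∏ v ∈ σ', lam v) = ∏ v : V, (if v ∈ σ' then lam v else 1) := by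
      rw [Finset.prod_ite_mem univ σ' lam, Finset.univ_inter]
    rw [l1, l2, ← Finset.prod_mul_distrib, ← Finset.prod_mul_distrib]
    refine Finset.prod_congr rfl fun v _ => ?_
    unfold stepFactor
    by_cases hv : v ∈ m
    · have hf : (∃ w ∈ σ, G.Adj v w) ↔ (∃ w ∈ σ', G.Adj v w) := by
        constructor
        · rintro ⟨w, hw, hadj⟩
          have hwm : w ∉ m := fun hwm => hm v hv w hwm hadj
          exact ⟨w, (hout w hwm).mp hw, hadj⟩
        · rintro ⟨w, hw, hadj⟩
          have hwm : w ∉ m := fun hwm => hm v hv w hwm hadj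
          exact ⟨w, (hout w hwm).mpr hw, hadj⟩
      by_cases hforced : ∃ w ∈ σ, G.Adj v w
      · have hforced' : ∃ w ∈ σ', G.Adj v w := hf.mp hforced
        have hvσ : v ∉ σ := by
          intro hvσ
          obtain ⟨w, hw, hadj⟩ := hforced
          exact hσ v hvσ w hw hadj
        have hvσ' : v ∉ σ' := by
          intro hvσ'
          obtain ⟨w, hw, hadj⟩ := hforced'
          exact hσ' v hvσ' w hw hadj
        simp [hv, hforced, hforced', hvσ, hvσ']
      · have hforced' : ¬ ∃ w ∈ σ', G.Adj v w := fun h => hforced (hf.mpr h)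
        by_cases h1 : v ∈ σ <;> by_cases h2 : v ∈ σ' <;>
          simp [hv, hforced, hforced', h1, h2] <;> ring
    · have hiff := hout v hv
      by_cases h1 : v ∈ σ <;> by_cases h2 : v ∈ σ' <;>
        simp [hv, h1, h2] <;> tauto
  · push_neg at hout
    obtain ⟨v, hvm, hviff⟩ := hout
    have z1 : stepFactor G lam σ m σ' v = 0 := by
      unfold stepFactor
      rw [if_neg hvm, if_neg (by tauto)]
    have z2 : stepFactor G lam σ' m σ v = 0 := by
      unfold stepFactor
      rw [if_neg hvm, if_neg (by tauto)]
    rw [Finset.prod_eq_zero (Finset.mem_univ v) z1, Finset.prod_eq_zero (Finset.mem_univ v) z2,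
      mul_zero, mul_zero]

lemma pgdP_zero_of_not_ind (hqsupp : ∀ m, ¬ IsInd G m → q m = 0)
    (σ σ' : Finset V) (hσ : IsInd G σ) (hσ' : ¬ IsInd G σ') :
    pgdP G lam q σ σ' = 0 := by
  unfold pgdP
  refine Finset.sum_eq_zero fun m _ => ?_
  by_cases hm : IsInd G m
  · rw [mul_eq_zero]; right
    by_contra hne
    have hfac : ∀ v : V, stepFactor G lam σ m σ' v ≠ 0 := by
      intro v hv0
      exact hne (Finset.prod_eq_zero (Finset.mem_univ v) hv0)
    have hmem : ∀ v ∈ σ', v ∈ m → ¬ ∃ w ∈ σ, G.Adj v w := by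
      intro v hv hvm hforced
      have h := hfac v
      unfold stepFactor at h
      rw [if_pos hvm, if_pos hforced, if_pos hv] at h
      exact h rfl
    have hmem2 : ∀ v ∈ σ', v ∉ m → v ∈ σ := by
      intro v hv hvm
      have h := hfac v
      unfold stepFactor at h
      rw [if_neg hvm] at h
      by_contra hvσ
      rw [if_neg (by tauto)] at h
      exact h rfl
    unfold IsInd at hσ'
    push_neg at hσ'
    obtain ⟨v, hv, w, hw, hadj⟩ := hσ'
    by_cases hvm : v ∈ m <;> by_cases hwm : w ∈ m
    · exact hm v hvm w hwm hadj
    · exact hmem v hv hvm ⟨w, hmem2 w hw hwm, hadj⟩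
    · exact hmem w hw hwm ⟨v, hmem2 v hv hvm, hadj.symm⟩
    · exact hσ v (hmem2 v hv hvm) w (hmem2 w hw hwm) hadj
  · rw [hqsupp m hm, zero_mul]

lemma prodForm_stationary (hlam : ∀ v, 0 < lam v)
    (hqsupp : ∀ m, ¬ IsInd G m → q m = 0) (hqsum : ∑ m : Finset V, q m = 1)
    (σ' : Finset V) :
    ∑ σ : Finset V, prodForm G lam σ * pgdP G lam q σ σ' = prodForm G lam σ' := by
  by_cases hσ' : IsInd G σ'
  · have hterm : ∀ σ : Finset V, prodForm G lam σ * pgdP G lam q σ σ'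
        = prodForm G lam σ' * pgdP G lam q σ' σ := by
      intro σ
      by_cases hσ : IsInd G σ
      · unfold prodForm pgdP
        rw [if_pos hσ, if_pos hσ', Finset.mul_sum, Finset.mul_sum]
        refine Finset.sum_congr rfl fun mm _ => ?_
        by_cases hqm : q mm = 0
        · rw [hqm]; ring
        · have hmInd : IsInd G mm := by
            by_contra h; exact hqm (hqsupp mm h)
          have h3 := rev_core G lam hlam σ σ' mm hσ hσ' hmInd
          rw [div_mul_eq_mul_div, div_mul_eq_mul_div]
          congr 1
          rw [mul_left_comm, h3, mul_left_comm]
      · have h0 : prodForm G lam σ = 0 := by unfold prodForm; rw [if_neg hσ]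
        rw [h0, zero_mul, pgdP_zero_of_not_ind G lam q hqsupp σ' σ hσ' hσ, mul_zero]
    simp_rw [hterm]
    rw [← Finset.mul_sum, pgdP_rowsum G lam q hlam hqsum σ', mul_one]
  · have hR : prodForm G lam σ' = 0 := by unfold prodForm; rw [if_neg hσ']
    rw [hR]
    refine Finset.sum_eq_zero fun σ _ => ?_
    by_cases hσ : IsInd G σ
    · rw [pgdP_zero_of_not_ind G lam q hqsupp σ σ' hσ hσ', mul_zero]
    · have h0 : prodForm G lam σ = 0 := by unfold prodForm; rw [if_neg hσ]
      rw [h0, zero_mul]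

end stationary


lemma sum_rot4 {A B C D : Type*} [Fintype A] [Fintype B] [Fintype C] [Fintype D]
    (f : A → B → C → D → ℝ) :
    ∑ a : A, ∑ b : B, ∑ c : C, ∑ d : D, f a b c d
      = ∑ c : C, ∑ d : D, ∑ a : A, ∑ b : B, f a b c d := by
  calc ∑ a : A, ∑ b : B, ∑ c : C, ∑ d : D, f a b c d
      = ∑ c : C, ∑ a : A, ∑ b : B, ∑ d : D, f a b c d :=
        sum_rot (fun a b c => ∑ d : D, f a b c d)
    _ = ∑ c : C, ∑ d : D, ∑ a : A, ∑ b : B, f a b c d :=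
        Finset.sum_congr rfl fun c _ => sum_rot (fun a b d => f a b c d)

section finale
variable (G : SimpleGraph V) [DecidableRel G.Adj] (lam : V → ℝ) (q : Finset V → ℝ)

/-- Coupled evolution of the chain started at `x` with the stationary chain. -/
noncomputable def rho (x : Finset V) : ℕ → Finset V → Finset V → ℝ
  | 0 => fun σ τ => (if σ = x then 1 else 0) * prodForm G lam τ
  | t + 1 => fun σ' τ' => ∑ σ : Finset V, ∑ τ : Finset V, rho x t σ τ * cK G lam q σ τ σ' τ'

lemma rho_nonneg (hlam : ∀ v, 0 < lam v) (hq0 : ∀ m, 0 ≤ q m) (x : Finset V) :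
    ∀ t σ τ, 0 ≤ rho G lam q x t σ τ := by
  intro t
  induction t with
  | zero =>
    intro σ τ
    exact mul_nonneg (by positivity) (prodForm_nonneg G lam hlam τ)
  | succ t ih =>
    intro σ' τ'
    exact Finset.sum_nonneg fun σ _ => Finset.sum_nonneg fun τ _ =>
      mul_nonneg (ih σ τ) (cK_nonneg G lam q hlam hq0 σ τ σ' τ')

lemma rho_fst (hlam : ∀ v, 0 < lam v) (x : Finset V) :
    ∀ t σ', ∑ τ' : Finset V, rho G lam q x t σ' τ' = chainDist (pgdP G lam q) x t σ' := by
  intro t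
  induction t with
  | zero =>
    intro σ'
    simp only [rho, chainDist, ← Finset.mul_sum, prodForm_sum G lam hlam, mul_one]
  | succ t ih =>
    intro σ'
    show ∑ τ' : Finset V, ∑ σ : Finset V, ∑ τ : Finset V,
        rho G lam q x t σ τ * cK G lam q σ τ σ' τ' = _
    rw [← sum_rot (fun σ τ τ' => rho G lam q x t σ τ * cK G lam q σ τ σ' τ')]
    simp_rw [← Finset.mul_sum, cK_marg_snd G lam q hlam, ← Finset.sum_mul, ih]
    rfl

lemma rho_snd (hlam : ∀ v, 0 < lam v) (hqsupp : ∀ m, ¬ IsInd G m → q m = 0)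
    (hqsum : ∑ m : Finset V, q m = 1) (x : Finset V) :
    ∀ t τ', ∑ σ' : Finset V, rho G lam q x t σ' τ' = prodForm G lam τ' := by
  intro t
  induction t with
  | zero =>
    intro τ'
    simp only [rho, ← Finset.sum_mul]
    rw [Finset.sum_ite_eq' univ x (fun _ => (1:ℝ))]
    simp
  | succ t ih =>
    intro τ'
    show ∑ σ' : Finset V, ∑ σ : Finset V, ∑ τ : Finset V,
        rho G lam q x t σ τ * cK G lam q σ τ σ' τ' = _
    rw [← sum_rot (fun σ τ σ' => rho G lam q x t σ τ * cK G lam q σ τ σ' τ')]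
    simp_rw [← Finset.mul_sum, cK_marg_fst G lam q hlam]
    rw [Finset.sum_comm]
    simp_rw [← Finset.sum_mul, ih]
    exact prodForm_stationary G lam q hlam hqsupp hqsum τ'

lemma rho_dist_le (hlam : ∀ v, 0 < lam v) (hq0 : ∀ m, 0 ≤ q m)
    (hqsum : ∑ m : Finset V, q m = 1) (hqv : ∀ v, 0 < qVert q v)
    (M θ : ℝ) (hMw : ∀ v, wt lam q v ≤ M) (hMpos : 0 < M)
    (hθle : ∀ v, θ ≤ 1 + lam v - ∑ w ∈ G.neighborFinset v, lam w) (hθpos : 0 < θ)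
    (hγ0 : 0 ≤ 1 - θ / M) (x : Finset V) :
    ∀ t, ∑ σ : Finset V, ∑ τ : Finset V, rho G lam q x t σ τ * dW lam q σ τ
      ≤ (1 - θ / M) ^ t * ((Fintype.card V : ℝ) * M) := by
  have hdWle : ∀ σ τ : Finset V, dW lam q σ τ ≤ (Fintype.card V : ℝ) * M := by
    intro σ τ
    unfold dW
    calc ∑ v : V, wt lam q v * (if (v ∈ σ ↔ v ∈ τ) then 0 else 1)
        ≤ ∑ _v : V, M := by
          refine Finset.sum_le_sum fun v _ => ?_
          have h1 : 0 ≤ wt lam q v := by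
            have := hlam v; have := hqv v; unfold wt; positivity
          by_cases h : v ∈ σ ↔ v ∈ τ <;> simp [h] <;> [exact hMpos.le; exact hMw v]
      _ = (Fintype.card V : ℝ) * M := by
          rw [Finset.sum_const, nsmul_eq_mul, Finset.card_univ]
  intro t
  induction t with
  | zero =>
    rw [pow_zero, one_mul]
    show ∑ σ : Finset V, ∑ τ : Finset V,
        ((if σ = x then 1 else 0) * prodForm G lam τ) * dW lam q σ τ ≤ _
    rw [Finset.sum_eq_single x (fun σ _ hσ => by simp [hσ]) (by simp)]
    simp only [eq_self_iff_true, if_true, one_mul]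
    calc ∑ τ : Finset V, prodForm G lam τ * dW lam q x τ
        ≤ ∑ τ : Finset V, prodForm G lam τ * ((Fintype.card V : ℝ) * M) := by
          refine Finset.sum_le_sum fun τ _ => ?_
          exact mul_le_mul_of_nonneg_left (hdWle x τ) (prodForm_nonneg G lam hlam τ)
      _ = (Fintype.card V : ℝ) * M := by
          rw [← Finset.sum_mul, prodForm_sum G lam hlam, one_mul]
  | succ t ih =>
    show ∑ σ' : Finset V, ∑ τ' : Finset V,
        (∑ σ : Finset V, ∑ τ : Finset V, rho G lam q x t σ τ * cK G lam q σ τ σ' τ')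
          * dW lam q σ' τ' ≤ _
    simp_rw [Finset.sum_mul]
    rw [sum_rot4 (fun σ' τ' σ τ => rho G lam q x t σ τ * cK G lam q σ τ σ' τ' * dW lam q σ' τ')]
    simp_rw [mul_assoc, ← Finset.mul_sum]
    calc ∑ σ : Finset V, ∑ τ : Finset V, rho G lam q x t σ τ *
          (∑ σ' : Finset V, ∑ τ' : Finset V, cK G lam q σ τ σ' τ' * dW lam q σ' τ')
        ≤ ∑ σ : Finset V, ∑ τ : Finset V, rho G lam q x t σ τ *
            ((1 - θ / M) * dW lam q σ τ) := by
          refine Finset.sum_le_sum fun σ _ => Finset.sum_le_sum fun τ _ => ?_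
          exact mul_le_mul_of_nonneg_left
            (cK_exp_dist_le G lam q hlam hq0 hqsum hqv M θ hMw hMpos hθle hθpos σ τ)
            (rho_nonneg G lam q hlam hq0 x t σ τ)
      _ = (1 - θ / M) * ∑ σ : Finset V, ∑ τ : Finset V,
            rho G lam q x t σ τ * dW lam q σ τ := by
          rw [Finset.mul_sum]
          refine Finset.sum_congr rfl fun σ _ => ?_
          rw [Finset.mul_sum]
          exact Finset.sum_congr rfl fun τ _ => by ring
      _ ≤ (1 - θ / M) * ((1 - θ / M) ^ t * ((Fintype.card V : ℝ) * M)) :=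
          mul_le_mul_of_nonneg_left ih hγ0
      _ = (1 - θ / M) ^ (t + 1) * ((Fintype.card V : ℝ) * M) := by ring

lemma tv_le_E (hlam : ∀ v, 0 < lam v) (hq0 : ∀ m, 0 ≤ q m)
    (hqsupp : ∀ m, ¬ IsInd G m → q m = 0) (hqsum : ∑ m : Finset V, q m = 1)
    (hqv : ∀ v, 0 < qVert q v)
    (mlow : ℝ) (hml : ∀ v, mlow ≤ wt lam q v) (hmlpos : 0 < mlow)
    (x : Finset V) (t : ℕ) :
    tvDist (chainDist (pgdP G lam q) x t) (prodForm G lam)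
      ≤ (∑ σ : Finset V, ∑ τ : Finset V, rho G lam q x t σ τ * dW lam q σ τ) / mlow := by
  have hρ0 : ∀ σ τ, 0 ≤ rho G lam q x t σ τ := rho_nonneg G lam q hlam hq0 x t
  have hdW0 : ∀ σ τ, 0 ≤ dW lam q σ τ := dW_nonneg lam q hlam hqv
  have hdWlow : ∀ σ τ : Finset V, σ ≠ τ → mlow ≤ dW lam q σ τ := by
    intro σ τ hne
    obtain ⟨v, hv⟩ : ∃ v, ¬ (v ∈ σ ↔ v ∈ τ) := by
      by_contra h
      push_neg at h
      exact hne (Finset.ext fun v => h v)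
    calc mlow ≤ wt lam q v := hml v
      _ = wt lam q v * (if (v ∈ σ ↔ v ∈ τ) then 0 else 1) := by rw [if_neg hv, mul_one]
      _ ≤ dW lam q σ τ := by
          unfold dW
          refine Finset.single_le_sum (f := fun u => wt lam q u * (if (u ∈ σ ↔ u ∈ τ) then 0 else 1))
            (fun u _ => ?_) (Finset.mem_univ v)
          have h1 : 0 ≤ wt lam q u := by
            have := hlam u; have := hqv u; unfold wt; positivity
          positivity
  have key : ∀ σ τ : Finset V, σ ≠ τ →
      rho G lam q x t σ τ ≤ rho G lam q x t σ τ * dW lam q σ τ / mlow := by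
    intro σ τ hne
    rw [le_div_iff₀ hmlpos]
    exact mul_le_mul_of_nonneg_left (hdWlow σ τ hne) (hρ0 σ τ)
  have habs : ∀ s : Finset V,
      |chainDist (pgdP G lam q) x t s - prodForm G lam s|
        ≤ (∑ τ ∈ univ.erase s, rho G lam q x t s τ)
          + ∑ σ ∈ univ.erase s, rho G lam q x t σ s := by
    intro s
    have h1 : chainDist (pgdP G lam q) x t s
        = rho G lam q x t s s + ∑ τ ∈ univ.erase s, rho G lam q x t s τ := by
      rw [← rho_fst G lam q hlam x t s, ← Finset.add_sum_erase univ _ (Finset.mem_univ s)]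
    have h2 : prodForm G lam s
        = rho G lam q x t s s + ∑ σ ∈ univ.erase s, rho G lam q x t σ s := by
      rw [← rho_snd G lam q hlam hqsupp hqsum x t s,
        ← Finset.add_sum_erase univ _ (Finset.mem_univ s)]
    have h3 : 0 ≤ ∑ τ ∈ univ.erase s, rho G lam q x t s τ :=
      Finset.sum_nonneg fun τ _ => hρ0 s τ
    have h4 : 0 ≤ ∑ σ ∈ univ.erase s, rho G lam q x t σ s :=
      Finset.sum_nonneg fun σ _ => hρ0 σ s
    rw [abs_sub_le_iff]
    constructor <;> [linarith [h1, h2]; linarith [h1, h2]]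
  have hE : ∀ s : Finset V,
      (∑ τ ∈ univ.erase s, rho G lam q x t s τ)
        ≤ ∑ τ : Finset V, rho G lam q x t s τ * dW lam q s τ / mlow := by
    intro s
    calc ∑ τ ∈ univ.erase s, rho G lam q x t s τ
        ≤ ∑ τ ∈ univ.erase s, rho G lam q x t s τ * dW lam q s τ / mlow := by
          refine Finset.sum_le_sum fun τ hτ => ?_
          exact key s τ (Finset.ne_of_mem_erase hτ).symm
      _ ≤ ∑ τ : Finset V, rho G lam q x t s τ * dW lam q s τ / mlow := by
          refine Finset.sum_le_sum_of_subset_of_nonneg (Finset.erase_subset _ _) ?_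
          intro τ _ _
          have := hρ0 s τ; have := hdW0 s τ
          positivity
  have hE2 : ∀ s : Finset V,
      (∑ σ ∈ univ.erase s, rho G lam q x t σ s)
        ≤ ∑ σ : Finset V, rho G lam q x t σ s * dW lam q σ s / mlow := by
    intro s
    calc ∑ σ ∈ univ.erase s, rho G lam q x t σ s
        ≤ ∑ σ ∈ univ.erase s, rho G lam q x t σ s * dW lam q σ s / mlow := by
          refine Finset.sum_le_sum fun σ hσ => ?_
          exact key σ s (Finset.ne_of_mem_erase hσ)
      _ ≤ ∑ σ : Finset V, rho G lam q x t σ s * dW lam q σ s / mlow := by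
          refine Finset.sum_le_sum_of_subset_of_nonneg (Finset.erase_subset _ _) ?_
          intro σ _ _
          have := hρ0 σ s; have := hdW0 σ s
          positivity
  unfold tvDist
  have hsum : ∑ s : Finset V, |chainDist (pgdP G lam q) x t s - prodForm G lam s|
      ≤ 2 * ((∑ σ : Finset V, ∑ τ : Finset V, rho G lam q x t σ τ * dW lam q σ τ) / mlow) := by
    calc ∑ s : Finset V, |chainDist (pgdP G lam q) x t s - prodForm G lam s|
        ≤ ∑ s : Finset V, ((∑ τ ∈ univ.erase s, rho G lam q x t s τ)
            + ∑ σ ∈ univ.erase s, rho G lam q x t σ s) :=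
          Finset.sum_le_sum fun s _ => habs s
      _ ≤ ∑ s : Finset V, ((∑ τ : Finset V, rho G lam q x t s τ * dW lam q s τ / mlow)
            + ∑ σ : Finset V, rho G lam q x t σ s * dW lam q σ s / mlow) :=
          Finset.sum_le_sum fun s _ => add_le_add (hE s) (hE2 s)
      _ = 2 * ((∑ σ : Finset V, ∑ τ : Finset V, rho G lam q x t σ τ * dW lam q σ τ) / mlow) := by
          rw [Finset.sum_add_distrib]
          rw [show (∑ s : Finset V, ∑ σ : Finset V, rho G lam q x t σ s * dW lam q σ s / mlow)
              = ∑ σ : Finset V, ∑ s : Finset V, rho G lam q x t σ s * dW lam q σ s / mlow from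
            Finset.sum_comm]
          rw [Finset.sum_div]
          simp_rw [Finset.sum_div]
          ring
  linarith [hsum]

end finale


/-- Corollary 2 of the paper: with `m = min (1+λ_v)/q_v`,
`M = max (1+λ_v)/q_v`, `ξ = M/m`, if
`θ = min_v (1 + λ_v - Σ_{w∈N_v} λ_w) > 0`, then `T_mix ≤ ⌈(M/θ) log(nξe)⌉`. -/
theorem pgd_fast_mixing_fugacity_weights
    {V : Type*} [Fintype V] [DecidableEq V] [Nonempty V]
    (G : SimpleGraph V) [DecidableRel G.Adj]
    (lam : V → ℝ) (hlam : ∀ v, 0 < lam v)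
    (q : Finset V → ℝ)
    (hq0 : ∀ m, 0 ≤ q m)
    (hqsupp : ∀ m, ¬ IsInd G m → q m = 0)
    (hqsum : ∑ m : Finset V, q m = 1)
    (hqv : ∀ v, 0 < qVert q v)
    (m M ξ θ : ℝ)
    (hm : m = univ.inf' univ_nonempty (fun v => (1 + lam v) / qVert q v))
    (hM : M = univ.sup' univ_nonempty (fun v => (1 + lam v) / qVert q v))
    (hξ : ξ = M / m)
    (hθ : θ = univ.inf' univ_nonempty (fun v =>
      1 + lam v - ∑ w ∈ G.neighborFinset v, lam w))
    (hθpos : 0 < θ) :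
    mixTime (pgdP G lam q) (prodForm G lam) (univ.filter (fun s => IsInd G s)) ≤
      ⌈(M / θ) * Real.log ((Fintype.card V : ℝ) * ξ * Real.exp 1)⌉₊ := by
    classical
  set n : ℝ := (Fintype.card V : ℝ) with hn
  set N : ℕ := ⌈(M / θ) * Real.log (n * ξ * Real.exp 1)⌉₊ with hN
  have hn1 : (1:ℝ) ≤ n := by
    rw [hn]; exact_mod_cast Fintype.card_pos
  have hml : ∀ v, m ≤ wt lam q v := by
    intro v; rw [hm]; exact Finset.inf'_le _ (Finset.mem_univ v)
  have hmlpos : 0 < m := by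
    rw [hm]
    rw [Finset.lt_inf'_iff]
    intro v _
    have := hlam v; have := hqv v
    positivity
  have hMw : ∀ v, wt lam q v ≤ M := by
    intro v; rw [hM]; exact Finset.le_sup' _ (Finset.mem_univ v)
  have hθle : ∀ v, θ ≤ 1 + lam v - ∑ w ∈ G.neighborFinset v, lam w := by
    intro v; rw [hθ]; exact Finset.inf'_le _ (Finset.mem_univ v)
  obtain ⟨v0⟩ : Nonempty V := inferInstance
  have hmM : m ≤ M := le_trans (hml v0) (hMw v0)
  have hMpos : 0 < M := lt_of_lt_of_le hmlpos hmM
  have hq1 : ∀ v, qVert q v ≤ 1 := by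
    intro v
    rw [← hqsum]
    exact Finset.sum_le_sum_of_subset_of_nonneg (Finset.filter_subset _ _)
      (fun mm _ _ => hq0 mm)
  have hθM : θ ≤ M := by
    have h1 := hθle v0
    have h2 : 0 ≤ ∑ w ∈ G.neighborFinset v0, lam w :=
      Finset.sum_nonneg fun w _ => (hlam w).le
    have h3 : 1 + lam v0 ≤ wt lam q v0 := by
      unfold wt
      rw [le_div_iff₀ (hqv v0)]
      nlinarith [hq1 v0, hlam v0, hqv v0]
    linarith [hMw v0]
  have hγ0 : 0 ≤ 1 - θ / M := by
    have : θ / M ≤ 1 := (div_le_one hMpos).mpr hθM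
    linarith
  have hξpos : 0 < ξ := by rw [hξ]; exact div_pos hMpos hmlpos
  have hcpos : 0 < n * ξ := by positivity
  have hbound : ∀ x : Finset V,
      tvDist (chainDist (pgdP G lam q) x N) (prodForm G lam) ≤ 1 / Real.exp 1 := by
    intro x
    have h1 := tv_le_E G lam q hlam hq0 hqsupp hqsum hqv m hml hmlpos x N
    have h2 := rho_dist_le G lam q hlam hq0 hqsum hqv M θ hMw hMpos hθle hθpos hγ0 x N
    have h3 : tvDist (chainDist (pgdP G lam q) x N) (prodForm G lam)
        ≤ ((1 - θ / M) ^ N * (n * M)) / m := by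
      refine le_trans h1 ?_
      gcongr
    have h4 : ((1 - θ / M) ^ N * (n * M)) / m = (1 - θ / M) ^ N * (n * ξ) := by
      rw [hξ]; field_simp; try ring
    rw [h4] at h3
    have h5 : (1 - θ / M) ^ N ≤ Real.exp (-(θ / M)) ^ N := by
      refine pow_le_pow_left₀ hγ0 ?_ N
      have := Real.add_one_le_exp (-(θ / M))
      linarith
    have h6 : Real.exp (-(θ / M)) ^ N = Real.exp (-((N : ℝ) * (θ / M))) := by
      rw [← Real.exp_nat_mul]; ring_nf
    have h7 : Real.log (n * ξ * Real.exp 1) ≤ (N : ℝ) * (θ / M) := by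
      have hNle : (M / θ) * Real.log (n * ξ * Real.exp 1) ≤ (N : ℝ) := Nat.le_ceil _
      have hpos : 0 < θ / M := div_pos hθpos hMpos
      calc Real.log (n * ξ * Real.exp 1)
          = ((M / θ) * Real.log (n * ξ * Real.exp 1)) * (θ / M) := by
            field_simp
          _ ≤ (N : ℝ) * (θ / M) := mul_le_mul_of_nonneg_right hNle hpos.le
    have h8 : Real.exp (-((N : ℝ) * (θ / M))) ≤ 1 / (n * ξ * Real.exp 1) := by
      rw [Real.exp_neg, one_div]
      refine inv_anti₀ (by positivity) ?_
      calc n * ξ * Real.exp 1 = Real.exp (Real.log (n * ξ * Real.exp 1)) := by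
            rw [Real.exp_log (by positivity)]
        _ ≤ Real.exp ((N : ℝ) * (θ / M)) := Real.exp_le_exp.mpr h7
    have h9 : (1 - θ / M) ^ N * (n * ξ) ≤ (1 / (n * ξ * Real.exp 1)) * (n * ξ) := by
      refine mul_le_mul_of_nonneg_right ?_ hcpos.le
      calc (1 - θ / M) ^ N ≤ Real.exp (-(θ / M)) ^ N := h5
        _ = Real.exp (-((N : ℝ) * (θ / M))) := h6
        _ ≤ 1 / (n * ξ * Real.exp 1) := h8
    have h10 : (1 / (n * ξ * Real.exp 1)) * (n * ξ) = 1 / Real.exp 1 := by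
      field_simp
    linarith [h3, h9]
  refine Finset.sup_le ?_
  intro x _
  exact Nat.sInf_le (hbound x)
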